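/- Let φ : Δ → Ω be a conformal map onto a BJ quasidisk (so that φ extends to a quasiconformal homeomorphism of the Riemann sphere, and the pull-back operator φ* is bounded from Carleson measures on Ω to Carleson measures on Δ). Then the pull-back operator φ*, defined by φ*dμ = |φ′|^{-1} d(μ∘φ), maps vanishing Carleson measures on Ω to vanishing Carleson measures on Δ, and is bounded between these spaces. -/

import Mathlib

open MeasureTheory Metric Set
open scoped ENNReal

noncomputable def carlesonNorm (Ω : Set ℂ) (μ : Measure ℂ) : ℝ≥0∞ :=
  ⨆ (z : ℂ) (_ : z ∈ frontier Ω) (r : ℝ)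
    (_ : 0 < r ∧ r < Metric.diam (frontier Ω)),
      μ (Ω ∩ Metric.ball z r) / ENNReal.ofReal r

def IsVanishingCarleson (Ω : Set ℂ) (μ : Measure ℂ) : Prop :=
  ∀ ε : ℝ, 0 < ε → ∃ r₀ > (0:ℝ), ∀ z ∈ frontier Ω, ∀ r : ℝ, 0 < r → r ≤ r₀ →
    μ (Ω ∩ Metric.ball z r) ≤ ENNReal.ofReal (ε * r)

/-- The pull-back `φ*μ = |φ′|⁻¹ d(μ∘φ)` of a measure `μ` on `Ω = φ(Δ)` under a
conformal map `φ : Δ → Ω` with inverse `ψ`. -/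
noncomputable def pullback (φ ψ : ℂ → ℂ) (Ω : Set ℂ) (μ : Measure ℂ) : Measure ℂ :=
  ((μ.restrict Ω).map ψ).withDensity
    (fun z => (ENNReal.ofReal ‖deriv φ z‖)⁻¹)

/-- Let `φ : Δ → Ω` be conformal onto a BJ quasidisk: `φ` extends to a
quasiconformal homeomorphism of the sphere (hence is bi-Hölder on the closed
disk) and the pull-back operator is bounded from `CM(Ω)` to `CM(Δ)`. Then the
pull-back operator maps vanishing Carleson measures on `Ω` to vanishing
Carleson measures on `Δ`, boundedly. -/
theorem pullback_vanishing_carleson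
    (φ ψ : ℂ → ℂ) (Ω : Set ℂ) (hΩ : φ '' ball (0:ℂ) 1 = Ω) (hΩopen : IsOpen Ω)
    (hφ : DifferentiableOn ℂ φ (ball (0:ℂ) 1))
    (hinj : InjOn φ (closedBall (0:ℂ) 1))
    (hψ : ∀ z ∈ closedBall (0:ℂ) 1, ψ (φ z) = z)
    (hφψ : ∀ w ∈ Ω, φ (ψ w) = w ∧ ψ w ∈ ball (0:ℂ) 1)
    -- bi-Hölder continuity on the closed disk (quasiconformal extension)
    (C₁ C₂ α : ℝ) (hC₁ : 0 < C₁) (hC₂ : 0 < C₂) (hα₀ : 0 < α) (hα₁ : α ≤ 1)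
    (hlow : ∀ z₁ ∈ closedBall (0:ℂ) 1, ∀ z₂ ∈ closedBall (0:ℂ) 1,
      C₁ * dist z₁ z₂ ^ (1 / α) ≤ dist (φ z₁) (φ z₂))
    (hup : ∀ z₁ ∈ closedBall (0:ℂ) 1, ∀ z₂ ∈ closedBall (0:ℂ) 1,
      dist (φ z₁) (φ z₂) ≤ C₂ * dist z₁ z₂ ^ α)
    -- boundedness of the pull-back operator on Carleson measures (Bishop–Jones)
    (K : ℝ≥0∞) (hK : K ≠ ⊤)
    (hbdd : ∀ μ : Measure ℂ, carlesonNorm Ω μ < ⊤ →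
      carlesonNorm (ball (0:ℂ) 1) (pullback φ ψ Ω μ) ≤ K * carlesonNorm Ω μ) :
    ∀ μ : Measure ℂ, carlesonNorm Ω μ < ⊤ → IsVanishingCarleson Ω μ →
      IsVanishingCarleson (ball (0:ℂ) 1) (pullback φ ψ Ω μ) ∧
      carlesonNorm (ball (0:ℂ) 1) (pullback φ ψ Ω μ) ≤ K * carlesonNorm Ω μ := by
  intro μ hμfin hμvan
  refine ⟨?_, hbdd μ hμfin⟩
  have hΩmeas : MeasurableSet Ω := hΩopen.measurableSet
  by_cases hae : AEMeasurable ψ (μ.restrict Ω)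
  · -- main case
    intro ε hε
    have hK0 : (0:ℝ) ≤ K.toReal := ENNReal.toReal_nonneg
    set ε' := ε / (2 * (K.toReal + 1)) with hε'def
    have hε' : 0 < ε' := by positivity
    obtain ⟨ρ₀, hρ₀, hvan⟩ := hμvan ε' hε'
    set b := min ρ₀ 1 / (2 * C₂) with hbdef
    have hbpos : 0 < b := by
      have : 0 < min ρ₀ 1 := lt_min hρ₀ one_pos
      positivity
    refine ⟨min 1 (b ^ (1/α)), lt_min one_pos (Real.rpow_pos_of_pos hbpos _), ?_⟩
    intro z hz r hr hrle
    have hr1 : r ≤ 1 := hrle.trans (min_le_left _ _)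
    have hrα : r ^ α ≤ b := by
      have h1 : r ≤ b ^ (1/α) := hrle.trans (min_le_right _ _)
      calc r ^ α ≤ (b ^ (1/α)) ^ α := Real.rpow_le_rpow hr.le h1 hα₀.le
        _ = b := by rw [one_div, Real.rpow_inv_rpow hbpos.le hα₀.ne']
    set t := C₂ * r ^ α with htdef
    have htpos : 0 < t := mul_pos hC₂ (Real.rpow_pos_of_pos hr _)
    have h2t : 2 * t ≤ ρ₀ := by
      have h1 : 2 * t ≤ 2 * C₂ * b := by rw [htdef]; nlinarith
      have h2 : 2 * C₂ * b = min ρ₀ 1 := by rw [hbdef]; field_simp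
      exact h1.trans (h2.le.trans (min_le_left _ _))
    have htρ : t ≤ ρ₀ := by linarith
    -- z is on the unit sphere
    have hzs : z ∈ sphere (0:ℂ) 1 := by
      rwa [frontier_ball (0:ℂ) one_ne_zero] at hz
    have hzn : ‖z‖ = 1 := by simpa using hzs
    have hzcb : z ∈ closedBall (0:ℂ) 1 := sphere_subset_closedBall hzs
    -- φ z is on the frontier of Ω
    have hφz : φ z ∈ frontier Ω := by
      rw [hΩopen.frontier_eq]
      constructor
      · -- φ z ∈ closure Ω
        rw [Metric.mem_closure_iff]
        intro δ hδ
        have hmpos : 0 < min δ 1 / (2 * C₂) := by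
          have : 0 < min δ 1 := lt_min hδ one_pos
          positivity
        set d := min (1/2) ((min δ 1 / (2 * C₂)) ^ (1/α)) with hddef
        have hdpos : 0 < d := lt_min one_half_pos (Real.rpow_pos_of_pos hmpos _)
        have hd1 : d ≤ 1/2 := min_le_left _ _
        set z' : ℂ := ((1 - d : ℝ) : ℂ) * z with hz'def
        have hz'ball : z' ∈ ball (0:ℂ) 1 := by
          rw [mem_ball, dist_zero_right, hz'def, norm_mul, hzn, mul_one,
            Complex.norm_real, Real.norm_eq_abs, abs_of_pos (by linarith)]
          linarith
        have hdzz' : dist z z' = d := by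
          rw [dist_eq_norm, hz'def]
          have : z - ((1 - d : ℝ) : ℂ) * z = ((d : ℝ) : ℂ) * z := by
            push_cast; ring
          rw [this, norm_mul, hzn, mul_one, Complex.norm_real, Real.norm_eq_abs,
            abs_of_pos hdpos]
        have hdα : d ^ α ≤ min δ 1 / (2 * C₂) := by
          calc d ^ α ≤ ((min δ 1 / (2 * C₂)) ^ (1/α)) ^ α :=
                Real.rpow_le_rpow hdpos.le (min_le_right _ _) hα₀.le
            _ = min δ 1 / (2 * C₂) := by
                rw [one_div, Real.rpow_inv_rpow hmpos.le hα₀.ne']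
        have hdist : dist (φ z) (φ z') < δ := by
          have h1 := hup z hzcb z' (ball_subset_closedBall hz'ball)
          rw [hdzz'] at h1
          have h2 : C₂ * d ^ α ≤ min δ 1 / 2 := by
            calc C₂ * d ^ α ≤ C₂ * (min δ 1 / (2 * C₂)) :=
                  mul_le_mul_of_nonneg_left hdα hC₂.le
              _ = min δ 1 / 2 := by field_simp [hC₂.ne']
          have h3 : min δ 1 / 2 < δ := by
            have := min_le_left δ 1
            have : min δ 1 ≤ δ := this
            linarith [lt_min hδ one_pos]
          linarith
        exact ⟨φ z', hΩ ▸ ⟨z', hz'ball, rfl⟩, hdist⟩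
      · -- φ z ∉ Ω
        intro hmem
        obtain ⟨heq, hball⟩ := hφψ (φ z) hmem
        have : ψ (φ z) = z := hinj (ball_subset_closedBall hball) hzcb heq
        rw [this] at hball
        rw [mem_ball, dist_zero_right, hzn] at hball
        exact lt_irrefl _ hball
    -- the restricted measure
    set cb := closedBall (φ z) t with hcbdef
    have hcbm : MeasurableSet cb := measurableSet_closedBall
    set μr := μ.restrict cb with hμrdef
    set A := ball (0:ℂ) 1 ∩ ball z r with hAdef
    have hA : MeasurableSet A := measurableSet_ball.inter measurableSet_ball
    -- key: points of Ω mapping into A lie in cb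
    have hsub : ∀ w, w ∈ Ω → ψ w ∈ A → w ∈ cb := by
      intro w hw hwA
      obtain ⟨hw1, hw2⟩ := hwA
      have h1 : ψ w ∈ closedBall (0:ℂ) 1 := ball_subset_closedBall hw1
      have h2 := hup (ψ w) h1 z hzcb
      have hd : dist (ψ w) z ^ α ≤ r ^ α :=
        Real.rpow_le_rpow dist_nonneg (le_of_lt (mem_ball.mp hw2)) hα₀.le
      have h3 : dist (φ (ψ w)) (φ z) ≤ C₂ * r ^ α :=
        h2.trans (mul_le_mul_of_nonneg_left hd hC₂.le)
      rw [(hφψ w hw).1] at h3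
      exact mem_closedBall.mpr h3
    have haer : AEMeasurable ψ (μr.restrict Ω) := by
      refine hae.mono_measure ?_
      rw [hμrdef, Measure.restrict_restrict hΩmeas]
      exact Measure.restrict_mono inter_subset_left le_rfl
    -- the pullbacks of μ and μr agree on A
    have hmeq : ((μ.restrict Ω).map ψ).restrict A = ((μr.restrict Ω).map ψ).restrict A := by
      ext s hs
      rw [Measure.restrict_apply hs, Measure.restrict_apply hs,
        Measure.map_apply_of_aemeasurable hae (hs.inter hA),
        Measure.map_apply_of_aemeasurable haer (hs.inter hA),
        Measure.restrict_apply' hΩmeas, hμrdef, Measure.restrict_restrict hΩmeas,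
        Measure.restrict_apply' (hΩmeas.inter hcbm)]
      congr 1
      ext w
      constructor
      · rintro ⟨hw1, hw2⟩
        exact ⟨hw1, hw2, hsub w hw2 hw1.2⟩
      · rintro ⟨hw1, hw2, _⟩
        exact ⟨hw1, hw2⟩
    have hkey : pullback φ ψ Ω μ A = pullback φ ψ Ω μr A := by
      rw [pullback, pullback, withDensity_apply _ hA, withDensity_apply _ hA, hmeq]
    -- Carleson norm bound for μr
    have hnorm : carlesonNorm Ω μr ≤ ENNReal.ofReal (2 * ε') := by
      rw [carlesonNorm]
      refine iSup_le fun w => iSup_le fun hw => iSup_le fun s => iSup_le fun hs => ?_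
      obtain ⟨hs0, _⟩ := hs
      refine ENNReal.div_le_of_le_mul ?_
      rw [← ENNReal.ofReal_mul (by positivity)]
      rcases le_or_gt s t with hst | hts
      · calc μr (Ω ∩ ball w s) ≤ μ (Ω ∩ ball w s) := by
              rw [hμrdef, Measure.restrict_apply' hcbm]
              exact measure_mono inter_subset_left
          _ ≤ ENNReal.ofReal (ε' * s) := hvan w hw s hs0 (hst.trans htρ)
          _ ≤ ENNReal.ofReal (2 * ε' * s) := by
              apply ENNReal.ofReal_le_ofReal; nlinarith
      · calc μr (Ω ∩ ball w s) = μ ((Ω ∩ ball w s) ∩ cb) := by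
              rw [hμrdef, Measure.restrict_apply' hcbm]
          _ ≤ μ (Ω ∩ ball (φ z) (2 * t)) := by
              refine measure_mono ?_
              rintro x ⟨⟨hx1, _⟩, hx2⟩
              exact ⟨hx1, lt_of_le_of_lt (mem_closedBall.mp hx2) (by linarith)⟩
          _ ≤ ENNReal.ofReal (ε' * (2 * t)) := hvan (φ z) hφz (2 * t) (by linarith) h2t
          _ ≤ ENNReal.ofReal (2 * ε' * s) := by
              apply ENNReal.ofReal_le_ofReal; nlinarith
    have hnfin : carlesonNorm Ω μr < ⊤ :=
      hnorm.trans_lt ENNReal.ofReal_lt_top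
    have hb2 : carlesonNorm (ball (0:ℂ) 1) (pullback φ ψ Ω μr)
        ≤ K * ENNReal.ofReal (2 * ε') :=
      (hbdd μr hnfin).trans (mul_le_mul_right hnorm K)
    -- diameter of the unit circle is at least 2
    have hdiam : (2:ℝ) ≤ diam (frontier (ball (0:ℂ) 1)) := by
      rw [frontier_ball (0:ℂ) one_ne_zero]
      have h1 : (1:ℂ) ∈ sphere (0:ℂ) 1 := by simp
      have h2 : (-1:ℂ) ∈ sphere (0:ℂ) 1 := by simp
      have := dist_le_diam_of_mem isBounded_sphere h1 h2
      rw [Complex.dist_eq] at this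
      norm_num at this
      exact this
    have hterm : pullback φ ψ Ω μr A / ENNReal.ofReal r
        ≤ carlesonNorm (ball (0:ℂ) 1) (pullback φ ψ Ω μr) := by
      rw [carlesonNorm]
      exact le_iSup_of_le z (le_iSup_of_le hz (le_iSup_of_le r
        (le_iSup_of_le ⟨hr, by linarith⟩ le_rfl)))
    have hle : pullback φ ψ Ω μr A ≤ (K * ENNReal.ofReal (2 * ε')) * ENNReal.ofReal r := by
      rw [← ENNReal.div_le_iff (by simpa using hr) ENNReal.ofReal_ne_top]
      exact hterm.trans hb2
    have hfinal : (K * ENNReal.ofReal (2 * ε')) * ENNReal.ofReal r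
        ≤ ENNReal.ofReal (ε * r) := by
      conv_lhs => rw [← ENNReal.ofReal_toReal hK]
      rw [← ENNReal.ofReal_mul hK0, ← ENNReal.ofReal_mul (by positivity)]
      apply ENNReal.ofReal_le_ofReal
      have h1 : K.toReal * (2 * ε') ≤ ε := by
        have hKne : K.toReal + 1 ≠ 0 := by positivity
        have hkk : K.toReal / (K.toReal + 1) ≤ 1 :=
          (div_le_one (by positivity)).mpr (by linarith)
        rw [hε'def]
        calc K.toReal * (2 * (ε / (2 * (K.toReal + 1))))
            = ε * (K.toReal / (K.toReal + 1)) := by field_simp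
          _ ≤ ε * 1 := mul_le_mul_of_nonneg_left hkk hε.le
          _ = ε := mul_one ε
      nlinarith
    calc pullback φ ψ Ω μ A = pullback φ ψ Ω μr A := hkey
      _ ≤ _ := hle.trans hfinal
  · -- ψ not a.e.-measurable: the pullback measure is zero
    have h0 : pullback φ ψ Ω μ = 0 := by
      rw [pullback, Measure.map_of_not_aemeasurable hae]
      ext s hs
      rw [withDensity_apply _ hs]
      simp
    intro ε hε
    refine ⟨1, one_pos, fun z hz r hr hrr => ?_⟩
    simp [h0]
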